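/- Let α > 0, K > 0, M_s > 0, and let ζ₀ : [1,∞) → ℝ be continuous with |ζ₀(x)| ≤ K e^{−α x} for all x ≥ 1. Then there exists C > 0 such that for every λ ∈ ℂ ∖ (−∞,0] with |λ| ≤ M_s there is a twice continuously differentiable solution φ⁺ : [1,∞) → ℂ of p'' + ζ₀ p = λ p such that, writing φ⁺(x) = e^{−√λ x}(1 + θ₁(x,λ)) and φ⁺'(x) = e^{−√λ x}(−√λ + θ₂(x,λ)), one has |θ₁(x,λ)| ≤ C e^{−α x} and |θ₂(x,λ)| ≤ C e^{−α x} for all x ≥ 1, with C independent of λ. -/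

import Mathlib

/-- Principal complex square root, via the principal branch of `z ^ (1/2)`;
for `z ∉ (-∞, 0]` it has positive real part. -/
noncomputable def csqrt (z : ℂ) : ℂ := z ^ (1/2 : ℂ)

/-- The negative real axis `(-∞, 0]` inside `ℂ`. -/
def negRealAxis : Set ℂ := {z : ℂ | z.im = 0 ∧ z.re ≤ 0}

namespace DecayingSolution
open MeasureTheory Set Filter Topology Complex


variable {E : Type*} [NormedAddCommGroup E] [NormedSpace ℝ E] [CompleteSpace E]

lemma tail_eq (g : ℝ → E) (hint : ∀ a : ℝ, IntegrableOn g (Ioi a)) (x : ℝ) :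
    ∫ t in Ioi x, g t = (∫ t in Ioi 0, g t) - ∫ t in (0:ℝ)..x, g t := by
  rcases le_total 0 x with h | h
  · rw [intervalIntegral.integral_of_le h, ← Ioc_union_Ioi_eq_Ioi h,
      setIntegral_union (Ioc_disjoint_Ioi le_rfl) measurableSet_Ioi
        ((hint 0).mono_set Ioc_subset_Ioi_self) (hint x)]
    abel
  · rw [intervalIntegral.integral_of_ge h, ← Ioc_union_Ioi_eq_Ioi h,
      setIntegral_union (Ioc_disjoint_Ioi le_rfl) measurableSet_Ioi
        ((hint x).mono_set Ioc_subset_Ioi_self) (hint 0)]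
    abel

lemma hasDerivAt_tail (g : ℝ → E) (hg : Continuous g)
    (hint : ∀ a : ℝ, IntegrableOn g (Ioi a)) (x : ℝ) :
    HasDerivAt (fun y => ∫ t in Ioi y, g t) (-(g x)) x := by
  have : (fun y => ∫ t in Ioi y, g t) = fun y => (∫ t in Ioi 0, g t) - ∫ t in (0:ℝ)..y, g t := by
    funext y; exact tail_eq g hint y
  rw [this]
  exact (intervalIntegral.integral_hasDerivAt_right (hg.intervalIntegrable _ _)
    (hg.stronglyMeasurableAtFilter _ _) hg.continuousAt).const_sub _

lemma tendsto_tail (g : ℝ → E) (hint : ∀ a : ℝ, IntegrableOn g (Ioi a)) :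
    Tendsto (fun x => ∫ t in Ioi x, g t) atTop (𝓝 0) := by
  have : (fun x => ∫ t in Ioi x, g t) = fun x => (∫ t in Ioi 0, g t) - ∫ t in (0:ℝ)..x, g t := by
    funext y; exact tail_eq g hint y
  rw [this]
  have := (intervalIntegral_tendsto_integral_Ioi 0 (hint 0) tendsto_id).const_sub
    (∫ t in Ioi 0, g t)
  simpa using this

lemma integral_exp_Ioi (b x : ℝ) (hb : 0 < b) :
    ∫ t in Ioi x, Real.exp (-b*t) = Real.exp (-b*x)/b := by
  have := integral_Ioi_of_hasDerivAt_of_tendsto' (f := fun t => -Real.exp (-b*t)/b)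
    (f' := fun t => Real.exp (-b*t)) (a := x) (m := 0) ?_ ?_ ?_
  · rw [this]; ring
  · intro t _
    have h1 : HasDerivAt (fun t : ℝ => -b*t) (-b) t := by
      simpa using (hasDerivAt_id t).const_mul (-b)
    have := ((h1.exp).neg).div_const b
    refine this.congr_deriv (Eq.symm ?_)
    field_simp
  · exact exp_neg_integrableOn_Ioi x hb
  · rw [show (0:ℝ) = -0/b by simp]
    apply Tendsto.div_const
    apply Tendsto.neg
    apply Real.tendsto_exp_atBot.comp
    apply Tendsto.const_mul_atTop_of_neg (neg_neg_iff_pos.mpr hb) tendsto_id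

lemma hasDerivAt_cexp_mul (w : ℂ) (s : ℝ) :
    HasDerivAt (fun s : ℝ => Complex.exp (-(↑s * w))) (-w * Complex.exp (-(↑s * w))) s := by
  have h0 : HasDerivAt (fun s : ℝ => (↑s : ℂ)) 1 s := Complex.ofRealCLM.hasDerivAt
  have h1 : HasDerivAt (fun s : ℝ => -((s:ℂ) * w)) (-w) s := by
    exact (h0.mul_const w).neg.congr_deriv (by simp)
  simpa [mul_comm] using h1.cexp

lemma norm_one_sub_exp_neg_le (w : ℂ) (hw : 0 ≤ w.re) : ‖1 - Complex.exp (-w)‖ ≤ ‖w‖ := by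
  have key : ∫ s in (0:ℝ)..1, w * Complex.exp (-(↑s * w)) =
      (fun s : ℝ => -Complex.exp (-(↑s * w))) 1 - (fun s : ℝ => -Complex.exp (-(↑s * w))) 0 := by
    apply intervalIntegral.integral_eq_sub_of_hasDerivAt (f := fun s : ℝ => -Complex.exp (-(↑s * w))) (f' := fun s : ℝ => w * Complex.exp (-(↑s * w)))
    · intro s _
      exact (hasDerivAt_cexp_mul w s).neg.congr_deriv (by ring)
    · apply Continuous.intervalIntegrable
      continuity
  simp only [Complex.ofReal_one, Complex.ofReal_zero, one_mul, zero_mul, neg_zero,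
    Complex.exp_zero] at key
  have : (1 : ℂ) - Complex.exp (-w) = ∫ s in (0:ℝ)..1, w * Complex.exp (-(↑s * w)) := by
    rw [key]; ring
  rw [this]
  have := intervalIntegral.norm_integral_le_of_norm_le_const
    (C := ‖w‖) (f := fun s : ℝ => w * Complex.exp (-(↑s * w))) (a := 0) (b := 1) ?_
  · simpa using this
  · intro s hs
    rw [Set.uIoc_of_le (by norm_num)] at hs
    rw [norm_mul]
    have hnorm : ‖Complex.exp (-(↑s * w))‖ ≤ 1 := by
      rw [Complex.norm_exp]
      apply Real.exp_le_one_iff.mpr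
      simp only [neg_re, Complex.mul_re, Complex.ofReal_re, Complex.ofReal_im, zero_mul, sub_zero]
      nlinarith [hs.1.le]
    nlinarith [norm_nonneg w]

lemma norm_one_sub_exp_le_two (w : ℂ) (hw : w.re ≤ 0) : ‖1 - Complex.exp w‖ ≤ 2 := by
  have h := norm_sub_le (1:ℂ) (Complex.exp w)
  have : ‖Complex.exp w‖ ≤ 1 := by
    rw [Complex.norm_exp]
    exact Real.exp_le_one_iff.mpr hw
  simp only [norm_one] at *
  linarith

lemma integrable_exp_abs {b : ℝ} (hb : 0 < b) :
    Integrable (fun t : ℝ => Real.exp (-b*|t|)) := by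
  have hf : IntegrableOn (fun t : ℝ => Real.exp (-b*|t|)) (Ioi 0) := by
    apply (exp_neg_integrableOn_Ioi 0 hb).congr_fun _ measurableSet_Ioi
    intro t ht
    simp only [abs_of_pos (show (0:ℝ) < t from ht)]
  have int_Iic : IntegrableOn (fun t : ℝ ↦ Real.exp (-b*|t|)) (Iic 0) := by
    rw [← Measure.map_neg_eq_self (volume : Measure ℝ)]
    let m : MeasurableEmbedding fun x : ℝ => -x := (Homeomorph.neg ℝ).measurableEmbedding
    rw [m.integrableOn_map_iff]
    simp_rw [Function.comp_def, abs_neg, neg_preimage, neg_Iic, neg_zero]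
    exact (integrableOn_Ici_iff_integrableOn_Ioi).mpr hf
  rw [← integrableOn_univ, ← Iic_union_Ioi (a := (0:ℝ))]
  exact int_Iic.union hf

lemma integral_exp_abs {b : ℝ} (hb : 0 < b) :
    ∫ t : ℝ, Real.exp (-b*|t|) = 2/b := by
  have := integral_comp_abs (f := fun s => Real.exp (-b*s))
  rw [integral_exp_Ioi b 0 hb] at this
  rw [this]
  simp [mul_div_assoc]
  ring

section helpers
variable {α K : ℝ} {ζ : ℝ → ℂ} {μ : ℂ}

-- kernel
noncomputable def kern (μ : ℂ) (x t : ℝ) : ℂ :=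
  -(1/(2*μ)) * (1 - Complex.exp (2*μ*(↑x - ↑t)))

lemma kern_norm_le_inv (hμ : 0 < μ.re) {x t : ℝ} (hxt : x ≤ t) :
    ‖kern μ x t‖ ≤ 1/‖μ‖ := by
  have hμne : μ ≠ 0 := fun h => by simp [h] at hμ
  have h1 : ‖kern μ x t‖ = ‖1 - Complex.exp (2*μ*(↑x - ↑t))‖ / (2*‖μ‖) := by
    rw [kern, norm_mul, norm_neg, norm_div, norm_one, norm_mul]
    simp
    ring
  rw [h1]
  have h2 : ‖1 - Complex.exp (2*μ*(↑x - ↑t))‖ ≤ 2 := by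
    apply norm_one_sub_exp_le_two
    have : (2*μ*(↑x - ↑t) : ℂ) = ((x - t : ℝ) : ℂ) * (2*μ) := by push_cast; ring
    rw [this, Complex.re_ofReal_mul]
    have : (2*μ).re = 2*μ.re := by simp [Complex.mul_re]
    rw [this]
    nlinarith
  have hμpos : 0 < ‖μ‖ := by simpa [norm_pos_iff] using hμne
  rw [div_le_div_iff₀ (by linarith) hμpos]
  nlinarith

lemma kern_norm_le_sub (hμ : 0 < μ.re) {x t : ℝ} (hxt : x ≤ t) :
    ‖kern μ x t‖ ≤ t - x := by
  have hμne : μ ≠ 0 := fun h => by simp [h] at hμ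
  have hμpos : 0 < ‖μ‖ := by simpa [norm_pos_iff] using hμne
  have h1 : ‖kern μ x t‖ = ‖1 - Complex.exp (2*μ*(↑x - ↑t))‖ / (2*‖μ‖) := by
    rw [kern, norm_mul, norm_neg, norm_div, norm_one, norm_mul]
    simp
    ring
  rw [h1]
  have hw : (2*μ*(↑x - ↑t) : ℂ) = -(((t - x : ℝ) : ℂ) * (2*μ)) := by push_cast; ring
  have h2 : ‖1 - Complex.exp (2*μ*(↑x - ↑t))‖ ≤ (t - x) * (2*‖μ‖) := by
    rw [hw]
    have hre : 0 ≤ (((t - x : ℝ) : ℂ) * (2*μ)).re := by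
      rw [Complex.re_ofReal_mul]
      have : (2*μ).re = 2*μ.re := by simp [Complex.mul_re]
      rw [this]
      nlinarith
    refine (norm_one_sub_exp_neg_le (((t - x : ℝ) : ℂ) * (2*μ)) hre).trans ?_
    have : ‖(((t - x : ℝ) : ℂ) * (2*μ))‖ = (t - x) * (2*‖μ‖) := by
      rw [norm_mul, Complex.norm_real, Real.norm_eq_abs,
        _root_.abs_of_nonneg (by linarith : (0:ℝ) ≤ t - x), norm_mul]
      norm_num
    rw [this]
  rw [div_le_iff₀ (by linarith)]
  exact h2

end helpers
section op
variable {ζ : ℝ → ℂ} {μ : ℂ} {m : ℝ → ℂ} {Cm : ℝ}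

lemma re2mul (μ : ℂ) (t : ℝ) : (2*μ*(t:ℂ)).re = 2*μ.re*t := by
  have h : (2*μ*(t:ℂ)) = ((t:ℝ):ℂ)*(2*μ) := by ring
  rw [h, Complex.re_ofReal_mul, Complex.mul_re]
  simp
  ring

lemma integrandB_cont (hζcont : Continuous ζ) (hmc : Continuous m) :
    Continuous (fun t : ℝ => Complex.exp (-(2*μ*↑t)) * (ζ t * m t)) :=
  (Complex.continuous_exp.comp ((continuous_const.mul Complex.continuous_ofReal).neg)).mul
    (hζcont.mul hmc)


lemma intA (hζInt : Integrable ζ) (hmc : Continuous m) (hm : ∀ t, ‖m t‖ ≤ Cm) :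
    Integrable (fun t => ζ t * m t) := by
  have := hζInt.bdd_mul (c := Cm) hmc.aestronglyMeasurable (ae_of_all _ hm)
  exact this.congr (ae_of_all _ fun t => mul_comm _ _)

lemma intB (hζcont : Continuous ζ) (hζInt : Integrable ζ) (hmc : Continuous m) (hm : ∀ t, ‖m t‖ ≤ Cm)
    (hμ : 0 < μ.re) (a : ℝ) :
    IntegrableOn (fun t => Complex.exp (-(2*μ*↑t)) * (ζ t * m t)) (Ioi a) := by
  have hCm : 0 ≤ Cm := le_trans (norm_nonneg _) (hm 0)
  apply Integrable.mono' (g := fun t => (Real.exp (-(2*μ.re*a)) * Cm) * ‖ζ t‖)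
    ((hζInt.norm.const_mul _).integrableOn)
  · exact (integrandB_cont hζcont hmc).aestronglyMeasurable.restrict
  · rw [ae_restrict_iff' measurableSet_Ioi]
    refine ae_of_all _ fun t ht => ?_
    rw [norm_mul, norm_mul]
    have h1 : ‖Complex.exp (-(2*μ*↑t))‖ = Real.exp (-(2*μ.re*t)) := by
      rw [Complex.norm_exp, Complex.neg_re, re2mul]
    rw [h1]
    have h2 : Real.exp (-(2*μ.re*t)) ≤ Real.exp (-(2*μ.re*a)) := by
      apply Real.exp_le_exp.mpr
      have := le_of_lt (mem_Ioi.mp ht)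
      nlinarith
    have hmt := hm t
    have hζn := norm_nonneg (ζ t)
    calc Real.exp (-(2*μ.re*t)) * (‖ζ t‖ * ‖m t‖)
        ≤ Real.exp (-(2*μ.re*a)) * (‖ζ t‖ * Cm) :=
          mul_le_mul h2 (mul_le_mul_of_nonneg_left hmt hζn) (by positivity) (Real.exp_nonneg _)
      _ = Real.exp (-(2*μ.re*a)) * Cm * ‖ζ t‖ := by ring

lemma split_int (hζcont : Continuous ζ) (hζInt : Integrable ζ) (hmc : Continuous m)
    (hm : ∀ t, ‖m t‖ ≤ Cm) (hμ : 0 < μ.re) (x : ℝ) :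
    ∫ t in Ioi x, kern μ x t * (ζ t * m t)
      = -(1/(2*μ)) * (∫ t in Ioi x, ζ t * m t)
        + ((1/(2*μ)) * Complex.exp (2*μ*↑x)) *
            (∫ t in Ioi x, Complex.exp (-(2*μ*↑t)) * (ζ t * m t)) := by
  rw [← integral_const_mul, ← integral_const_mul,
    ← integral_add ((intA hζInt hmc hm).integrableOn.const_mul _)
      ((intB hζcont hζInt hmc hm hμ x).const_mul _)]
  refine setIntegral_congr_fun measurableSet_Ioi (fun t _ => ?_)
  have key : Complex.exp (2*μ*(↑x - ↑t)) = Complex.exp (2*μ*↑x) * Complex.exp (-(2*μ*↑t)) := by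
    rw [← Complex.exp_add]; ring_nf
  rw [kern, key]; ring

lemma hasDeriv_split (hζcont : Continuous ζ) (hζInt : Integrable ζ) (hmc : Continuous m)
    (hm : ∀ t, ‖m t‖ ≤ Cm) (hμ : 0 < μ.re) (x : ℝ) :
    HasDerivAt (fun y => ∫ t in Ioi y, kern μ y t * (ζ t * m t))
      (Complex.exp (2*μ*↑x) * ∫ t in Ioi x, Complex.exp (-(2*μ*↑t)) * (ζ t * m t)) x := by
  have hμne : μ ≠ 0 := fun h => by simp [h] at hμ
  have hfun : (fun y => ∫ t in Ioi y, kern μ y t * (ζ t * m t))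
      = (fun y => -(1/(2*μ)) * (∫ t in Ioi y, ζ t * m t)
        + ((1/(2*μ)) * Complex.exp (2*μ*↑y)) *
            (∫ t in Ioi y, Complex.exp (-(2*μ*↑t)) * (ζ t * m t))) :=
    funext (split_int hζcont hζInt hmc hm hμ)
  rw [hfun]
  have hA := (hasDerivAt_tail (fun t => ζ t * m t) (hζcont.mul hmc)
    (fun a => (intA hζInt hmc hm).integrableOn) x).const_mul (-(1/(2*μ)))
  have hB := hasDerivAt_tail (fun t => Complex.exp (-(2*μ*↑t)) * (ζ t * m t))
    (integrandB_cont hζcont hmc) (intB hζcont hζInt hmc hm hμ) x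
  have hexpcore : HasDerivAt (fun y : ℝ => Complex.exp (2*μ*↑y)) (2*μ*Complex.exp (2*μ*↑x)) x := by
    have h0 : HasDerivAt (fun y : ℝ => ((y : ℂ))) 1 x := Complex.ofRealCLM.hasDerivAt
    have h1 := h0.const_mul (2*μ)
    simpa [mul_comm] using h1.cexp
  have hexp := hexpcore.const_mul (1/(2*μ))
  have hsum := hA.add (hexp.mul hB)
  refine hsum.congr_deriv (Eq.symm ?_)
  have hcc : Complex.exp (2*μ*↑x) * Complex.exp (-(2*μ*↑x)) = 1 := by
    rw [← Complex.exp_add]; simp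
  set B := ∫ t in Ioi x, Complex.exp (-(2*μ*↑t)) * (ζ t * m t)
  field_simp
  linear_combination (ζ x * m x) * hcc
end op

section op2
variable {ζ : ℝ → ℂ} {μ : ℂ} {m : ℝ → ℂ} {Cm : ℝ}

lemma kern_cont (μ : ℂ) (x : ℝ) : Continuous (fun t : ℝ => kern μ x t) := by
  unfold kern
  exact continuous_const.mul ((continuous_const.sub (Complex.continuous_exp.comp
    (continuous_const.mul (continuous_const.sub Complex.continuous_ofReal)))))

lemma kern_bound_pt (hμ : 0 < μ.re) (hmc : Continuous m) (hm : ∀ t, ‖m t‖ ≤ Cm)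
    {x t : ℝ} (ht : t ∈ Ioi x) :
    ‖kern μ x t * (ζ t * m t)‖ ≤ Cm / ‖μ‖ * ‖ζ t‖ := by
  have hμne : μ ≠ 0 := fun h => by simp [h] at hμ
  have hμpos : 0 < ‖μ‖ := by simpa [norm_pos_iff] using hμne
  have hCm : 0 ≤ Cm := le_trans (norm_nonneg _) (hm 0)
  calc ‖kern μ x t * (ζ t * m t)‖ = ‖kern μ x t‖ * (‖ζ t‖ * ‖m t‖) := by
        rw [norm_mul, norm_mul]
    _ ≤ (1/‖μ‖) * (‖ζ t‖ * Cm) :=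
        mul_le_mul (kern_norm_le_inv hμ (le_of_lt ht))
          (mul_le_mul_of_nonneg_left (hm t) (norm_nonneg _)) (by positivity) (by positivity)
    _ = Cm / ‖μ‖ * ‖ζ t‖ := by ring

lemma intKern (hζInt : Integrable ζ) (hmc : Continuous m) (hm : ∀ t, ‖m t‖ ≤ Cm)
    (hμ : 0 < μ.re) (x : ℝ) :
    IntegrableOn (fun t => kern μ x t * (ζ t * m t)) (Ioi x) := by
  apply Integrable.mono' (g := fun t => Cm / ‖μ‖ * ‖ζ t‖)
    ((hζInt.norm.const_mul _).integrableOn)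
  · exact ((kern_cont μ x).aestronglyMeasurable.mul
      (hζInt.1.mul hmc.aestronglyMeasurable)).restrict
  · rw [ae_restrict_iff' measurableSet_Ioi]
    exact ae_of_all _ fun t ht => kern_bound_pt hμ hmc hm ht

lemma F_bound (hζInt : Integrable ζ) (hmc : Continuous m) (hm : ∀ t, ‖m t‖ ≤ Cm)
    (hμ : 0 < μ.re) {c₀ : ℝ} (htail : ∀ y, (∫ t in Ioi y, ‖ζ t‖) ≤ c₀) (x : ℝ) :
    ‖∫ t in Ioi x, kern μ x t * (ζ t * m t)‖ ≤ Cm * c₀ / ‖μ‖ := by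
  have hμne : μ ≠ 0 := fun h => by simp [h] at hμ
  have hμpos : 0 < ‖μ‖ := by simpa [norm_pos_iff] using hμne
  have hCm : 0 ≤ Cm := le_trans (norm_nonneg _) (hm 0)
  refine (norm_integral_le_of_norm_le (g := fun t => Cm / ‖μ‖ * ‖ζ t‖)
    ((hζInt.norm.const_mul _).integrableOn) ?_).trans ?_
  · rw [ae_restrict_iff' measurableSet_Ioi]
    exact ae_of_all _ fun t ht => kern_bound_pt hμ hmc hm ht
  · rw [integral_const_mul]
    calc Cm / ‖μ‖ * ∫ t in Ioi x, ‖ζ t‖ ≤ Cm / ‖μ‖ * c₀ :=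
          mul_le_mul_of_nonneg_left (htail x) (by positivity)
      _ = Cm * c₀ / ‖μ‖ := by ring

end op2

section opT
open BoundedContinuousFunction
variable (ζ : ℝ → ℂ) (μ : ℂ) (c₀ : ℝ)

lemma one_add_bcf_cont (θb : BoundedContinuousFunction ℝ ℂ) :
    Continuous (fun t : ℝ => 1 + θb t) := continuous_const.add θb.continuous

lemma one_add_bcf_bd (θb : BoundedContinuousFunction ℝ ℂ) (t : ℝ) :
    ‖1 + θb t‖ ≤ 1 + ‖θb‖ := by
  refine (norm_add_le _ _).trans ?_
  rw [norm_one]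
  have := θb.norm_coe_le_norm t
  linarith

noncomputable def Tmap (hζcont : Continuous ζ) (hζInt : Integrable ζ)
    (hμ : 0 < μ.re) (htail : ∀ y, (∫ t in Ioi y, ‖ζ t‖) ≤ c₀)
    (θb : BoundedContinuousFunction ℝ ℂ) : BoundedContinuousFunction ℝ ℂ :=
  BoundedContinuousFunction.ofNormedAddCommGroup
    (fun x => ∫ t in Ioi x, kern μ x t * (ζ t * (1 + θb t)))
    (continuous_iff_continuousAt.mpr fun x =>
      (hasDeriv_split hζcont hζInt (one_add_bcf_cont θb)
        (one_add_bcf_bd θb) hμ x).continuousAt)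
    ((1 + ‖θb‖) * c₀ / ‖μ‖)
    (fun x => F_bound hζInt (one_add_bcf_cont θb) (one_add_bcf_bd θb) hμ htail x)

lemma Tmap_apply (hζcont : Continuous ζ) (hζInt : Integrable ζ)
    (hμ : 0 < μ.re) (htail : ∀ y, (∫ t in Ioi y, ‖ζ t‖) ≤ c₀)
    (θb : BoundedContinuousFunction ℝ ℂ) (x : ℝ) :
    Tmap ζ μ c₀ hζcont hζInt hμ htail θb x
      = ∫ t in Ioi x, kern μ x t * (ζ t * (1 + θb t)) := rfl

lemma Tmap_diff (hζcont : Continuous ζ) (hζInt : Integrable ζ)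
    (hμ : 0 < μ.re) (htail : ∀ y, (∫ t in Ioi y, ‖ζ t‖) ≤ c₀)
    (θb θc : BoundedContinuousFunction ℝ ℂ) (x : ℝ) :
    Tmap ζ μ c₀ hζcont hζInt hμ htail θb x - Tmap ζ μ c₀ hζcont hζInt hμ htail θc x
      = ∫ t in Ioi x, kern μ x t * (ζ t * (θb t - θc t)) := by
  rw [Tmap_apply, Tmap_apply,
    ← integral_sub (intKern hζInt (one_add_bcf_cont θb) (one_add_bcf_bd θb) hμ x)
      (intKern hζInt (one_add_bcf_cont θc) (one_add_bcf_bd θc) hμ x)]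
  refine setIntegral_congr_fun measurableSet_Ioi (fun t _ => ?_)
  ring
end opT

section fp
variable {ζ : ℝ → ℂ} {μ : ℂ} {c₀ : ℝ}

lemma exists_fixedPoint (hζcont : Continuous ζ) (hζInt : Integrable ζ)
    (hμ : 0 < μ.re) (htail : ∀ y, (∫ t in Ioi y, ‖ζ t‖) ≤ c₀) :
    ∃ θ₀ : BoundedContinuousFunction ℝ ℂ,
      ∀ x, θ₀ x = ∫ t in Ioi x, kern μ x t * (ζ t * (1 + θ₀ t)) := by
  have hμne : μ ≠ 0 := fun h => by simp [h] at hμ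
  have hμpos : 0 < ‖μ‖ := by simpa [norm_pos_iff] using hμne
  have hc₀ : 0 ≤ c₀ := le_trans (by positivity) (htail 0)
  set T := Tmap ζ μ c₀ hζcont hζInt hμ htail with hTdef
  -- the weight function
  set ητ : ℝ → ℝ := fun y => (∫ t in Ioi y, ‖ζ t‖) / ‖μ‖ with hητdef
  have hητc : ∀ y, HasDerivAt ητ (-(‖ζ y‖) / ‖μ‖) y := fun y =>
    (hasDerivAt_tail (fun t => ‖ζ t‖) hζcont.norm (fun a => hζInt.norm.integrableOn) y).div_const _
  have hητ_nonneg : ∀ y, 0 ≤ ητ y := fun y => by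
    apply div_nonneg _ (norm_nonneg μ)
    exact setIntegral_nonneg measurableSet_Ioi fun t _ => norm_nonneg _
  have hητ_le : ∀ y, ητ y ≤ c₀ / ‖μ‖ := fun y => by
    exact div_le_div_of_nonneg_right (htail y) hμpos.le
  have hητ_tend : Tendsto ητ atTop (𝓝 0) := by
    have := (tendsto_tail (fun t => ‖ζ t‖) (fun a => hζInt.norm.integrableOn)).div_const ‖μ‖
    simpa using this
  have hητ_cont : Continuous ητ := continuous_iff_continuousAt.mpr fun y => (hητc y).continuousAt
  have hIntPow : ∀ (n : ℕ) (y : ℝ),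
      IntegrableOn (fun t => (‖ζ t‖ / ‖μ‖) * ητ t ^ n) (Ioi y) := by
    intro n y
    have := ((hζInt.norm.div_const ‖μ‖).integrableOn (s := Ioi y)).bdd_mul
      (c := (c₀/‖μ‖)^n) (f := fun t => ητ t ^ n)
      ((hητ_cont.pow n).aestronglyMeasurable.restrict)
      (ae_of_all _ fun t => by
        rw [Real.norm_eq_abs, _root_.abs_of_nonneg (pow_nonneg (hητ_nonneg t) n)]
        exact pow_le_pow_left₀ (hητ_nonneg t) (hητ_le t) n)
    exact this.congr (ae_of_all _ fun t => mul_comm _ _)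
  -- key integral identity
  have hkey : ∀ (n : ℕ) (y : ℝ),
      ∫ t in Ioi y, (‖ζ t‖ / ‖μ‖) * ητ t ^ n = ητ y ^ (n+1) / (n+1) := by
    intro n y
    have hderiv : ∀ t, HasDerivAt (fun s => -(ητ s ^ (n+1) / ((n:ℝ)+1)))
        ((‖ζ t‖ / ‖μ‖) * ητ t ^ n) t := by
      intro t
      have h1 := ((hητc t).pow (n+1)).div_const ((n:ℝ)+1) |>.neg
      have hne : ((n:ℝ)+1) ≠ 0 := by positivity
      refine h1.congr_deriv (Eq.symm ?_)
      simp only [Nat.add_sub_cancel]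
      push_cast
      rw [mul_assoc, mul_div_cancel_left₀ _ hne]
      ring
    have hInt := hIntPow n y
    have htend : Tendsto (fun s => -(ητ s ^ (n+1) / ((n:ℝ)+1))) atTop (𝓝 0) := by
      have := ((hητ_tend.pow (n+1)).div_const ((n:ℝ)+1)).neg
      simpa using this
    have := integral_Ioi_of_hasDerivAt_of_tendsto' (fun t _ => hderiv t) hInt htend
    rw [this]
    push_cast
    ring
  -- iterate estimate
  have hiter : ∀ (n : ℕ) (θb θc : BoundedContinuousFunction ℝ ℂ) (x : ℝ),
      ‖(T^[n] θb) x - (T^[n] θc) x‖ ≤ dist θb θc * ητ x ^ n / (n.factorial : ℝ) := by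
    intro n θb θc
    induction n with
    | zero =>
      intro x
      simp only [Function.iterate_zero_apply, pow_zero, Nat.factorial_zero, Nat.cast_one,
        mul_one, div_one]
      rw [← dist_eq_norm]
      exact BoundedContinuousFunction.dist_coe_le_dist x
    | succ n ih =>
      intro x
      rw [Function.iterate_succ_apply', Function.iterate_succ_apply']
      rw [Tmap_diff]
      have hg : IntegrableOn
          (fun t => dist θb θc / (n.factorial : ℝ) * ((‖ζ t‖ / ‖μ‖) * ητ t ^ n)) (Ioi x) :=
        (hIntPow n x).const_mul _
      refine (norm_integral_le_of_norm_le hg ?_).trans ?_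
      · rw [ae_restrict_iff' measurableSet_Ioi]
        refine ae_of_all _ fun t ht => ?_
        have h1 : ‖kern μ x t * (ζ t * ((T^[n] θb) t - (T^[n] θc) t))‖
            ≤ (1/‖μ‖) * (‖ζ t‖ * (dist θb θc * ητ t ^ n / (n.factorial : ℝ))) := by
          rw [norm_mul, norm_mul]
          apply mul_le_mul (kern_norm_le_inv hμ (le_of_lt ht))
            (mul_le_mul_of_nonneg_left (ih t) (norm_nonneg _)) (by positivity) (by positivity)
        refine h1.trans (le_of_eq ?_)
        ring
      · rw [integral_const_mul, hkey n x, Nat.factorial_succ]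
        apply le_of_eq
        push_cast
        rw [div_mul_div_comm]
        ring
  obtain ⟨n, hn⟩ := ((FloorSemiring.tendsto_pow_div_factorial_atTop (c₀/‖μ‖)).eventually
    (gt_mem_nhds zero_lt_one)).exists
  set Kc : NNReal := ⟨(c₀/‖μ‖)^n / (n.factorial : ℝ), by positivity⟩ with hKcdef
  have hlip : LipschitzWith Kc (T^[n]) := by
    apply LipschitzWith.of_dist_le_mul
    intro θb θc
    rw [BoundedContinuousFunction.dist_le (by positivity)]
    intro x
    rw [dist_eq_norm]
    refine (hiter n θb θc x).trans ?_
    have hpow := pow_le_pow_left₀ (hητ_nonneg x) (hητ_le x) n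
    calc dist θb θc * ητ x ^ n / (n.factorial : ℝ)
        ≤ dist θb θc * (c₀/‖μ‖) ^ n / (n.factorial : ℝ) := by
          apply div_le_div_of_nonneg_right _ (by positivity)
          exact mul_le_mul_of_nonneg_left hpow dist_nonneg
      _ = (Kc : ℝ) * dist θb θc := by
          rw [hKcdef]
          show _ = (c₀ / ‖μ‖) ^ n / (n.factorial : ℝ) * dist θb θc
          push_cast
          ring
  have hcontr : ContractingWith Kc (T^[n]) := ⟨by exact_mod_cast hn, hlip⟩
  set θ₀ := ContractingWith.fixedPoint (T^[n]) hcontr with hθ₀def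
  have hfix : Function.IsFixedPt T θ₀ := hcontr.isFixedPt_fixedPoint_iterate
  refine ⟨θ₀, fun x => ?_⟩
  conv_lhs => rw [← hfix]
  exact Tmap_apply ζ μ c₀ hζcont hζInt hμ htail θ₀ x

end fp

lemma exp_prod_bound {α x t : ℝ} (hα : 0 < α) (hxt : x ≤ t) :
    (t - x) * Real.exp (-α*t) ≤ (2/α) * (Real.exp (-(α/2)*x) * Real.exp (-(α/2)*t)) := by
  have h1 : t - x ≤ (2/α) * Real.exp ((α/2)*(t-x)) := by
    have h0 := Real.add_one_le_exp ((α/2)*(t-x))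
    have h2 : (α/2)*(t-x) ≤ Real.exp ((α/2)*(t-x)) := by linarith
    calc t - x = (2/α) * ((α/2)*(t-x)) := by field_simp
      _ ≤ (2/α) * Real.exp ((α/2)*(t-x)) := mul_le_mul_of_nonneg_left h2 (by positivity)
  calc (t-x)*Real.exp (-α*t) ≤ ((2/α) * Real.exp ((α/2)*(t-x))) * Real.exp (-α*t) :=
      mul_le_mul_of_nonneg_right h1 (Real.exp_nonneg _)
    _ = (2/α) * (Real.exp (-(α/2)*x) * Real.exp (-(α/2)*t)) := by
      rw [mul_assoc, ← Real.exp_add, ← Real.exp_add]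
      congr 2
      ring

lemma abs_exp_decay {α : ℝ} (hα : 0 < α) (t : ℝ) :
    |t| * Real.exp (-α*|t|) ≤ (2/α) * Real.exp (-(α/2)*|t|) := by
  have := exp_prod_bound (x := 0) (t := |t|) hα (abs_nonneg t)
  simpa using this

lemma construction (α K : ℝ) (hα : 0 < α) (hK : 0 < K)
    (ζ : ℝ → ℂ) (hζcont : Continuous ζ)
    (hbd : ∀ t, ‖ζ t‖ ≤ K * Real.exp (-α * |t|))
    (μ : ℂ) (hμ : 0 < μ.re) :
    ∃ θ θd : ℝ → ℂ,
      (∀ x, HasDerivAt θ (θd x) x) ∧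
      (∀ x, HasDerivAt θd (2*μ*θd x - ζ x * (1 + θ x)) x) ∧
      (∀ x, 0 ≤ x → ‖θ x‖ ≤ Real.exp (4*K/α^2) * (4*K/α^2) * Real.exp (-α*x)) ∧
      (∀ x, 0 ≤ x → ‖θd x‖ ≤ Real.exp (4*K/α^2) * (K/α) * Real.exp (-α*x)) := by
  have hμne : μ ≠ 0 := fun h => by simp [h] at hμ
  have hμpos : 0 < ‖μ‖ := by simpa [norm_pos_iff] using hμne
  have hmaj : Integrable (fun t : ℝ => K * Real.exp (-α*|t|)) :=
    (integrable_exp_abs hα).const_mul K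
  have hbd' : ∀ t, ‖ζ t‖ ≤ K * Real.exp (-α*|t|) := by
    intro t; have := hbd t; linarith [le_of_eq (rfl : K * Real.exp (-α * |t|) = K * Real.exp (-α*|t|))]
  have hζInt : Integrable ζ := hmaj.mono' hζcont.aestronglyMeasurable (ae_of_all _ hbd')
  have htail : ∀ y, (∫ t in Ioi y, ‖ζ t‖) ≤ 2*K/α := by
    intro y
    have h1 : (∫ t in Ioi y, ‖ζ t‖) ≤ ∫ t : ℝ, ‖ζ t‖ :=
      setIntegral_le_integral hζInt.norm (ae_of_all _ fun t => norm_nonneg _)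
    have h2 : (∫ t : ℝ, ‖ζ t‖) ≤ ∫ t : ℝ, K * Real.exp (-α*|t|) :=
      integral_mono hζInt.norm hmaj hbd'
    have h3 : (∫ t : ℝ, K * Real.exp (-α*|t|)) = K * (2/α) := by
      rw [integral_const_mul, integral_exp_abs hα]
    have h4 : K * (2/α) = 2*K/α := by ring
    linarith
  obtain ⟨θ₀, hθeq⟩ := exists_fixedPoint hζcont hζInt hμ htail
  have hmc : Continuous (fun t : ℝ => 1 + θ₀ t) := one_add_bcf_cont θ₀
  have hmb : ∀ t, ‖1 + θ₀ t‖ ≤ 1 + ‖θ₀‖ := one_add_bcf_bd θ₀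
  set M := ‖θ₀‖ with hMdef
  -- derivative structure
  set θd : ℝ → ℂ := fun x => Complex.exp (2*μ*↑x) *
    ∫ t in Ioi x, Complex.exp (-(2*μ*↑t)) * (ζ t * (1 + θ₀ t)) with hθddef
  have hθd : ∀ x, HasDerivAt (fun y => θ₀ y) (θd x) x := by
    intro x
    have h := hasDeriv_split hζcont hζInt hmc hmb hμ x
    exact h.congr_of_eventuallyEq (Filter.Eventually.of_forall fun y => hθeq y)
  have hB : ∀ x, HasDerivAt (fun y => ∫ t in Ioi y, Complex.exp (-(2*μ*↑t)) * (ζ t * (1 + θ₀ t)))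
      (-(Complex.exp (-(2*μ*↑x)) * (ζ x * (1 + θ₀ x)))) x := fun x =>
    hasDerivAt_tail _ (integrandB_cont hζcont hmc) (intB hζcont hζInt hmc hmb hμ) x
  have hexpcore : ∀ x : ℝ, HasDerivAt (fun y : ℝ => Complex.exp (2*μ*↑y))
      (2*μ*Complex.exp (2*μ*↑x)) x := by
    intro x
    have h0 : HasDerivAt (fun y : ℝ => ((y : ℂ))) 1 x := Complex.ofRealCLM.hasDerivAt
    have h1 := h0.const_mul (2*μ)
    simpa [mul_comm] using h1.cexp
  have hθdd : ∀ x, HasDerivAt θd (2*μ*θd x - ζ x * (1 + θ₀ x)) x := by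
    intro x
    have h := (hexpcore x).mul (hB x)
    have hcc : Complex.exp (2*μ*↑x) * Complex.exp (-(2*μ*↑x)) = 1 := by
      rw [← Complex.exp_add]; simp
    rw [hθddef]
    refine h.congr_deriv (Eq.symm ?_)
    linear_combination (ζ x * (1 + θ₀ x)) * hcc
  -- Gronwall machinery
  set q : ℝ → ℝ := fun t => ‖ζ t‖ * (1 + ‖θ₀ t‖) with hqdef
  have hqc : Continuous q := hζcont.norm.mul (continuous_const.add θ₀.continuous.norm)
  have hq_nonneg : ∀ t, 0 ≤ q t := fun t =>
    mul_nonneg (norm_nonneg _) (by positivity)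
  have hq_bd : ∀ t, q t ≤ (1+M) * (K * Real.exp (-α*|t|)) := by
    intro t
    have h1 := hbd' t
    have h2 : 1 + ‖θ₀ t‖ ≤ 1 + M := by
      have := θ₀.norm_coe_le_norm t; linarith
    calc q t ≤ (K * Real.exp (-α*|t|)) * (1 + ‖θ₀ t‖) :=
          mul_le_mul_of_nonneg_right h1 (by positivity)
      _ ≤ (K * Real.exp (-α*|t|)) * (1 + M) :=
          mul_le_mul_of_nonneg_left h2 (by positivity)
      _ = (1+M) * (K * Real.exp (-α*|t|)) := by ring
  set r : ℝ → ℝ := fun t => t * q t with hrdef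
  have hrc : Continuous r := continuous_id.mul hqc
  have hr_int : Integrable r := by
    apply Integrable.mono'
      ((integrable_exp_abs (half_pos hα)).const_mul ((1+M)*K*(2/α)))
      hrc.aestronglyMeasurable
    refine ae_of_all _ fun t => ?_
    have h0 : 0 ≤ 1 + M := by positivity
    have h1 : ‖r t‖ = |t| * q t := by
      rw [hrdef, Real.norm_eq_abs, abs_mul, _root_.abs_of_nonneg (hq_nonneg t)]
    rw [h1]
    calc |t| * q t ≤ |t| * ((1+M) * (K * Real.exp (-α*|t|))) :=
          mul_le_mul_of_nonneg_left (hq_bd t) (abs_nonneg t)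
      _ = ((1+M)*K) * (|t| * Real.exp (-α*|t|)) := by ring
      _ ≤ ((1+M)*K) * ((2/α) * Real.exp (-(α/2)*|t|)) :=
          mul_le_mul_of_nonneg_left (abs_exp_decay hα t) (by positivity)
      _ = (1+M)*K*(2/α) * Real.exp (-(α/2)*|t|) := by ring
  have hc2 : Continuous (fun t : ℝ => t * ‖ζ t‖) := by exact continuous_id.mul hζcont.norm
  have hηg_int : Integrable (fun t : ℝ => t * ‖ζ t‖) := by
    apply Integrable.mono'
      ((integrable_exp_abs (half_pos hα)).const_mul (K*(2/α)))
      hc2.aestronglyMeasurable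
    refine ae_of_all _ fun t => ?_
    have h1 : ‖t * ‖ζ t‖‖ = |t| * ‖ζ t‖ := by
      rw [Real.norm_eq_abs, abs_mul, _root_.abs_of_nonneg (norm_nonneg _)]
    rw [h1]
    calc |t| * ‖ζ t‖ ≤ |t| * (K * Real.exp (-α*|t|)) :=
          mul_le_mul_of_nonneg_left (hbd' t) (abs_nonneg t)
      _ = K * (|t| * Real.exp (-α*|t|)) := by ring
      _ ≤ K * ((2/α) * Real.exp (-(α/2)*|t|)) :=
          mul_le_mul_of_nonneg_left (abs_exp_decay hα t) hK.le
      _ = K*(2/α) * Real.exp (-(α/2)*|t|) := by ring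
  set P : ℝ → ℝ := fun y => ∫ t in Ioi y, r t with hPdef
  set ηg : ℝ → ℝ := fun y => ∫ t in Ioi y, t * ‖ζ t‖ with hηgdef
  have hPd : ∀ y, HasDerivAt P (-(r y)) y := fun y =>
    hasDerivAt_tail r hrc (fun a => hr_int.integrableOn) y
  have hηd : ∀ y, HasDerivAt ηg (-(y * ‖ζ y‖)) y := fun y =>
    hasDerivAt_tail _ hc2 (fun a => hηg_int.integrableOn) y
  have hPtend : Tendsto P atTop (𝓝 0) := tendsto_tail r (fun a => hr_int.integrableOn)
  have hηtend : Tendsto ηg atTop (𝓝 0) :=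
    tendsto_tail _ (fun a => hηg_int.integrableOn)
  have hPnn : ∀ y, 0 ≤ y → 0 ≤ P y := by
    intro y hy
    apply setIntegral_nonneg measurableSet_Ioi
    intro t ht
    exact mul_nonneg (le_trans hy (le_of_lt ht)) (hq_nonneg t)
  have h1P : ∀ y, 0 ≤ y → 0 < 1 + P y := fun y hy => by linarith [hPnn y hy]
  have hθleP : ∀ x, 0 ≤ x → ‖θ₀ x‖ ≤ P x := by
    intro x hx
    rw [hθeq x]
    refine norm_integral_le_of_norm_le hr_int.integrableOn ?_
    rw [ae_restrict_iff' measurableSet_Ioi]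
    refine ae_of_all _ fun t ht => ?_
    have hxt : x ≤ t := le_of_lt ht
    have hm1 : ‖(1:ℂ) + θ₀ t‖ ≤ 1 + ‖θ₀ t‖ := by
      refine (norm_add_le _ _).trans ?_; rw [norm_one]
    calc ‖kern μ x t * (ζ t * (1 + θ₀ t))‖ = ‖kern μ x t‖ * (‖ζ t‖ * ‖(1:ℂ) + θ₀ t‖) := by
          rw [norm_mul, norm_mul]
      _ ≤ (t - x) * (‖ζ t‖ * (1 + ‖θ₀ t‖)) :=
          mul_le_mul (kern_norm_le_sub hμ hxt)
            (mul_le_mul_of_nonneg_left hm1 (norm_nonneg _)) (by positivity)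
            (by linarith)
      _ = (t - x) * q t := by rw [hqdef]
      _ ≤ t * q t := mul_le_mul_of_nonneg_right (by linarith) (hq_nonneg t)
      _ = r t := by rw [hrdef]
  set G : ℝ → ℝ := fun y => ηg y - Real.log (1 + P y) with hGdef
  have hGd : ∀ y, 0 < y → HasDerivAt G (-(y * ‖ζ y‖) - (-(r y))/(1 + P y)) y := by
    intro y hy
    exact (hηd y).sub (((hPd y).const_add 1).log (h1P y hy.le).ne')
  have hGcont : ContinuousOn G (Ici 0) := by
    intro y hy
    have hc : ContinuousAt G y := by
      apply ContinuousAt.sub (hηd y).continuousAt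
      exact (continuousAt_const.add (hPd y).continuousAt).log (h1P y hy).ne'
    exact hc.continuousWithinAt
  have hGanti : AntitoneOn G (Ici 0) := by
    apply antitoneOn_of_deriv_nonpos (convex_Ici 0) hGcont
    · intro y hy
      rw [interior_Ici] at hy
      exact (hGd y hy).differentiableAt.differentiableWithinAt
    · intro y hy
      rw [interior_Ici] at hy
      rw [(hGd y hy).deriv]
      have hq_le : q y ≤ ‖ζ y‖ * (1 + P y) := by
        have := hθleP y hy.le
        rw [hqdef]
        apply mul_le_mul_of_nonneg_left (by linarith) (norm_nonneg _)
      have hr_le : r y ≤ y * ‖ζ y‖ * (1 + P y) := by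
        rw [hrdef]
        calc y * q y ≤ y * (‖ζ y‖ * (1 + P y)) :=
              mul_le_mul_of_nonneg_left hq_le hy.le
          _ = y * ‖ζ y‖ * (1 + P y) := by ring
      have hdiv : (-(r y))/(1 + P y) ≥ -(y * ‖ζ y‖) := by
        rw [ge_iff_le, neg_div, neg_le_neg_iff, div_le_iff₀ (h1P y hy.le)]
        exact hr_le
      linarith
  have hGtend : Tendsto G atTop (𝓝 0) := by
    have h1 : Tendsto (fun y => 1 + P y) atTop (𝓝 1) := by
      simpa using tendsto_const_nhds.add hPtend
    have hlog : Tendsto (fun y => Real.log (1 + P y)) atTop (𝓝 0) := by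
      have := h1.log one_ne_zero
      simpa using this
    have := hηtend.sub hlog
    simpa using this
  have hGnn : ∀ x, 0 ≤ x → 0 ≤ G x := by
    intro x hx
    apply le_of_tendsto hGtend
    filter_upwards [eventually_ge_atTop x] with y hy
    exact hGanti hx (le_trans hx hy) hy
  have hPle : ∀ x, 0 ≤ x → 1 + P x ≤ Real.exp (ηg x) := by
    intro x hx
    have h := hGnn x hx
    have h2 : Real.log (1 + P x) ≤ ηg x := by
      rw [hGdef] at h; simp at h; linarith
    calc 1 + P x = Real.exp (Real.log (1 + P x)) := (Real.exp_log (h1P x hx)).symm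
      _ ≤ Real.exp (ηg x) := Real.exp_le_exp.mpr h2
  have hηg_le : ∀ x, 0 ≤ x → ηg x ≤ 4*K/α^2 := by
    intro x hx
    have hptwise : ∀ t ∈ Ioi x, t * ‖ζ t‖ ≤ K*(2/α) * Real.exp (-(α/2)*t) := by
      intro t ht
      have ht0 : 0 ≤ t := le_trans hx (le_of_lt ht)
      have habs : |t| = t := _root_.abs_of_nonneg ht0
      calc t * ‖ζ t‖ ≤ t * (K * Real.exp (-α*t)) := by
            have := hbd' t; rw [habs] at this
            exact mul_le_mul_of_nonneg_left this ht0
        _ = K * ((t - 0) * Real.exp (-α*t)) := by ring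
        _ ≤ K * ((2/α) * (Real.exp (-(α/2)*0) * Real.exp (-(α/2)*t))) :=
            mul_le_mul_of_nonneg_left (exp_prod_bound hα ht0) hK.le
        _ = K*(2/α) * Real.exp (-(α/2)*t) := by simp; ring
    have hmono := setIntegral_mono_on hηg_int.integrableOn
      ((exp_neg_integrableOn_Ioi x (half_pos hα)).const_mul (K*(2/α)))
      measurableSet_Ioi hptwise
    have hval : (∫ t in Ioi x, K*(2/α) * Real.exp (-(α/2)*t))
        = K*(2/α) * (Real.exp (-(α/2)*x)/(α/2)) := by
      rw [integral_const_mul, integral_exp_Ioi (α/2) x (half_pos hα)]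
    have hle1 : Real.exp (-(α/2)*x) ≤ 1 := by
      apply Real.exp_le_one_iff.mpr; nlinarith
    calc ηg x ≤ K*(2/α) * (Real.exp (-(α/2)*x)/(α/2)) := by rw [← hval]; exact hmono
      _ ≤ K*(2/α) * (1/(α/2)) := by
          apply mul_le_mul_of_nonneg_left _ (by positivity)
          exact div_le_div_of_nonneg_right hle1 (le_of_lt (half_pos hα))
      _ = 4*K/α^2 := by field_simp; ring
  set U := Real.exp (4*K/α^2) with hUdef
  have hmU : ∀ t, 0 ≤ t → ‖(1:ℂ) + θ₀ t‖ ≤ U := by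
    intro t ht
    have h1 : ‖(1:ℂ) + θ₀ t‖ ≤ 1 + ‖θ₀ t‖ := by
      refine (norm_add_le _ _).trans ?_; rw [norm_one]
    have h2 := hθleP t ht
    have h3 := hPle t ht
    have h4 := Real.exp_le_exp.mpr (hηg_le t ht)
    rw [hUdef]
    linarith
  -- final bounds
  have final1 : ∀ x, 0 ≤ x → ‖θ₀ x‖ ≤ U * (4*K/α^2) * Real.exp (-α*x) := by
    intro x hx
    rw [hθeq x]
    refine (norm_integral_le_of_norm_le
      (g := fun t => (U*K*(2/α)*Real.exp (-(α/2)*x)) * Real.exp (-(α/2)*t))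
      ((exp_neg_integrableOn_Ioi x (half_pos hα)).const_mul _) ?_).trans ?_
    · rw [ae_restrict_iff' measurableSet_Ioi]
      refine ae_of_all _ fun t ht => ?_
      have hxt : x ≤ t := le_of_lt ht
      have ht0 : 0 ≤ t := le_trans hx hxt
      have habs : |t| = t := _root_.abs_of_nonneg ht0
      have hζt : ‖ζ t‖ ≤ K * Real.exp (-α*t) := by have := hbd' t; rwa [habs] at this
      calc ‖kern μ x t * (ζ t * (1 + θ₀ t))‖
          = ‖kern μ x t‖ * (‖ζ t‖ * ‖(1:ℂ) + θ₀ t‖) := by rw [norm_mul, norm_mul]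
        _ ≤ (t - x) * ((K * Real.exp (-α*t)) * U) := by
            apply mul_le_mul (kern_norm_le_sub hμ hxt)
              (mul_le_mul hζt (hmU t ht0) (norm_nonneg _) (by positivity))
              (by positivity) (by linarith)
        _ = (K*U) * ((t - x) * Real.exp (-α*t)) := by ring
        _ ≤ (K*U) * ((2/α) * (Real.exp (-(α/2)*x) * Real.exp (-(α/2)*t))) :=
            mul_le_mul_of_nonneg_left (exp_prod_bound hα hxt) (by positivity)
        _ = (U*K*(2/α)*Real.exp (-(α/2)*x)) * Real.exp (-(α/2)*t) := by ring
    · rw [integral_const_mul, integral_exp_Ioi (α/2) x (half_pos hα)]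
      apply le_of_eq
      have hxx : Real.exp (-(α/2)*x) * Real.exp (-(α/2)*x) = Real.exp (-α*x) := by
        rw [← Real.exp_add]; congr 1; ring
      rw [show U*(4*K/α^2) * Real.exp (-α*x)
          = U*(4*K/α^2)*(Real.exp (-(α/2)*x)*Real.exp (-(α/2)*x)) by rw [hxx]]
      field_simp
      ring
  have final2 : ∀ x, 0 ≤ x → ‖θd x‖ ≤ U * (K/α) * Real.exp (-α*x) := by
    intro x hx
    rw [hθddef]
    simp only []
    rw [norm_mul]
    have hen : ‖Complex.exp (2*μ*↑x)‖ = Real.exp (2*μ.re*x) := by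
      rw [Complex.norm_exp, re2mul]
    have hBbd : ‖∫ t in Ioi x, Complex.exp (-(2*μ*↑t)) * (ζ t * (1 + θ₀ t))‖
        ≤ (Real.exp (-(2*μ.re*x)) * (K*U)) * (Real.exp (-α*x)/α) := by
      refine (norm_integral_le_of_norm_le
        (g := fun t => (Real.exp (-(2*μ.re*x)) * (K*U)) * Real.exp (-α*t))
        ((exp_neg_integrableOn_Ioi x hα).const_mul _) ?_).trans ?_
      · rw [ae_restrict_iff' measurableSet_Ioi]
        refine ae_of_all _ fun t ht => ?_
        have hxt : x ≤ t := le_of_lt ht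
        have ht0 : 0 ≤ t := le_trans hx hxt
        have habs : |t| = t := _root_.abs_of_nonneg ht0
        have hζt : ‖ζ t‖ ≤ K * Real.exp (-α*t) := by have := hbd' t; rwa [habs] at this
        have he : ‖Complex.exp (-(2*μ*↑t))‖ = Real.exp (-(2*μ.re*t)) := by
          rw [Complex.norm_exp, Complex.neg_re, re2mul]
        have he2 : Real.exp (-(2*μ.re*t)) ≤ Real.exp (-(2*μ.re*x)) := by
          apply Real.exp_le_exp.mpr; nlinarith
        calc ‖Complex.exp (-(2*μ*↑t)) * (ζ t * (1 + θ₀ t))‖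
            = ‖Complex.exp (-(2*μ*↑t))‖ * (‖ζ t‖ * ‖(1:ℂ) + θ₀ t‖) := by rw [norm_mul, norm_mul]
          _ ≤ Real.exp (-(2*μ.re*x)) * ((K * Real.exp (-α*t)) * U) := by
              rw [he]
              apply mul_le_mul he2
                (mul_le_mul hζt (hmU t ht0) (norm_nonneg _) (by positivity))
                (by positivity) (Real.exp_nonneg _)
          _ = (Real.exp (-(2*μ.re*x)) * (K*U)) * Real.exp (-α*t) := by ring
      · rw [integral_const_mul, integral_exp_Ioi α x hα]
    calc ‖Complex.exp (2*μ*↑x)‖ * ‖∫ t in Ioi x, Complex.exp (-(2*μ*↑t)) * (ζ t * (1 + θ₀ t))‖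
        ≤ Real.exp (2*μ.re*x) * ((Real.exp (-(2*μ.re*x)) * (K*U)) * (Real.exp (-α*x)/α)) := by
          rw [hen]
          exact mul_le_mul_of_nonneg_left hBbd (Real.exp_nonneg _)
      _ = (Real.exp (2*μ.re*x) * Real.exp (-(2*μ.re*x))) * ((K*U) * (Real.exp (-α*x)/α)) := by
          ring
      _ = U * (K/α) * Real.exp (-α*x) := by
          rw [← Real.exp_add]
          simp
          ring
  exact ⟨(fun y => θ₀ y), θd, hθd, hθdd, final1, final2⟩

lemma csqrt_re_pos {lam : ℂ} (hax : lam ∉ negRealAxis) : 0 < (csqrt lam).re := by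
  have hne : lam ≠ 0 := by
    intro h
    exact hax (by simp [h, negRealAxis])
  have harg1 : -Real.pi < Complex.arg lam := Complex.neg_pi_lt_arg lam
  have harg2 : Complex.arg lam < Real.pi := by
    rcases lt_or_eq_of_le (Complex.arg_le_pi lam) with h | h
    · exact h
    · exfalso
      rw [Complex.arg_eq_pi_iff] at h
      exact hax ⟨h.2, h.1.le⟩
  rw [csqrt, Complex.cpow_def_of_ne_zero hne, Complex.exp_re]
  have him : (Complex.log lam * (1/2 : ℂ)).im = Complex.arg lam * (1/2) := by
    rw [Complex.mul_im]
    simp [Complex.log_im]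
  rw [him]
  have hcos : 0 < Real.cos (Complex.arg lam * (1/2)) := by
    apply Real.cos_pos_of_mem_Ioo
    constructor <;> [linarith; linarith]
  positivity

lemma csqrt_sq {lam : ℂ} (hne : lam ≠ 0) : csqrt lam * csqrt lam = lam := by
  rw [csqrt, ← Complex.cpow_add _ _ hne]
  norm_num

lemma csqrt_abs_le {lam : ℂ} (hne : lam ≠ 0) {Ms : ℝ} (hMs : ‖lam‖ ≤ Ms) :
    ‖csqrt lam‖ ≤ Real.sqrt Ms := by
  have h := Complex.norm_cpow_of_ne_zero hne (1/2 : ℂ)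
  rw [show (1/2:ℂ) = ((1/2:ℝ):ℂ) by norm_num] at h
  rw [Complex.ofReal_re, Complex.ofReal_im, mul_zero, Real.exp_zero, div_one] at h
  rw [csqrt, show (1/2:ℂ) = ((1/2:ℝ):ℂ) by norm_num, h,
    Real.sqrt_eq_rpow]
  exact Real.rpow_le_rpow (norm_nonneg lam) hMs (by norm_num)


end DecayingSolution

open DecayingSolution MeasureTheory Set Filter Topology Complex in
/-- Construction of the decaying solution `φ⁺(x) = e^{-√λ x}(1 + θ₁)` on `[1,∞)`,
with remainders of size `O(e^{-α x})` uniformly in `|λ| ≤ M_s`. -/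
theorem decaying_solution_at_plus_infinity
    (α K Ms : ℝ) (hα : 0 < α) (hK : 0 < K) (hMs : 0 < Ms)
    (ζ₀ : ℝ → ℝ) (hζcont : ContinuousOn ζ₀ (Set.Ici 1))
    (hζbd : ∀ x ≥ (1:ℝ), |ζ₀ x| ≤ K * Real.exp (-α * x)) :
    ∃ C > 0, ∀ lam : ℂ, lam ∉ negRealAxis → ‖lam‖ ≤ Ms →
      ∃ φ θ₁ θ₂ : ℝ → ℂ,
        ContDiff ℝ 2 φ ∧
        (∀ x ≥ (1:ℝ), deriv (deriv φ) x + (ζ₀ x : ℂ) * φ x = lam * φ x) ∧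
        (∀ x ≥ (1:ℝ), φ x = Complex.exp (-(csqrt lam) * (x : ℂ)) * (1 + θ₁ x)) ∧
        (∀ x ≥ (1:ℝ), deriv φ x = Complex.exp (-(csqrt lam) * (x : ℂ)) * (-(csqrt lam) + θ₂ x)) ∧
        (∀ x ≥ (1:ℝ), ‖θ₁ x‖ ≤ C * Real.exp (-α * x) ∧ ‖θ₂ x‖ ≤ C * Real.exp (-α * x)) := by
  classical
  set U := Real.exp (4*K/α^2) with hUdef
  set C : ℝ := U * (4*K/α^2) + (U * (K/α) + Real.sqrt Ms * (U * (4*K/α^2))) + 1 with hCdef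
  have hU0 : 0 < U := Real.exp_pos _
  have hC0 : 0 < C := by positivity
  refine ⟨C, hC0, ?_⟩
  intro lam hax hMsle
  have hlamne : lam ≠ 0 := by
    intro h
    exact hax (by simp [h, negRealAxis])
  set μ := csqrt lam with hμdef
  have hμre : 0 < μ.re := csqrt_re_pos hax
  have hμsq : μ * μ = lam := csqrt_sq hlamne
  have hμabs : ‖μ‖ ≤ Real.sqrt Ms := csqrt_abs_le hlamne hMsle
  -- the globalized potential
  set ζ : ℝ → ℂ := fun t => ((ζ₀ (max t 1) * Real.exp (α * (min t 1 - 1)) : ℝ) : ℂ) with hζdef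
  have hζc : Continuous ζ := by
    apply Complex.continuous_ofReal.comp
    apply Continuous.mul
    · exact hζcont.comp_continuous (continuous_id.max continuous_const)
        (fun x => le_max_right x 1)
    · exact Real.continuous_exp.comp
        (continuous_const.mul ((continuous_id.min continuous_const).sub continuous_const))
  have hζeq : ∀ x : ℝ, 1 ≤ x → ζ x = ((ζ₀ x : ℝ) : ℂ) := by
    intro x hx
    rw [hζdef]
    simp only [max_eq_left hx, min_eq_right hx, sub_self, mul_zero, Real.exp_zero, mul_one]
  have hζb : ∀ t, ‖ζ t‖ ≤ K * Real.exp (-α * |t|) := by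
    intro t
    rw [hζdef]
    have hn : ‖((ζ₀ (max t 1) * Real.exp (α * (min t 1 - 1)) : ℝ) : ℂ)‖
        = |ζ₀ (max t 1)| * Real.exp (α * (min t 1 - 1)) := by
      rw [Complex.norm_real, Real.norm_eq_abs, abs_mul, Real.abs_exp]
    rw [hn]
    rcases le_total 1 t with h1 | h1
    · rw [max_eq_left h1, min_eq_right h1]
      simp only [sub_self, mul_zero, Real.exp_zero, mul_one]
      have := hζbd t h1
      have habs : |t| = t := _root_.abs_of_nonneg (by linarith)
      rw [habs]
      exact this
    · rw [max_eq_right h1, min_eq_left h1]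
      have hz1 := hζbd 1 le_rfl
      have hexp : |ζ₀ 1| * Real.exp (α * (t - 1)) ≤
          (K * Real.exp (-α * 1)) * Real.exp (α * (t - 1)) :=
        mul_le_mul_of_nonneg_right hz1 (Real.exp_nonneg _)
      refine hexp.trans ?_
      rw [mul_assoc, ← Real.exp_add]
      apply mul_le_mul_of_nonneg_left _ hK.le
      apply Real.exp_le_exp.mpr
      rcases le_total 0 t with h2 | h2
      · rw [_root_.abs_of_nonneg h2]; nlinarith
      · rw [abs_of_nonpos h2]; nlinarith
  obtain ⟨θ, θd, hθd, hθdd, hb1, hb2⟩ := construction α K hα hK ζ hζc hζb μ hμre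
  have hθcont : Continuous θ := by
    apply continuous_iff_continuousAt.mpr
    exact fun x => (hθd x).continuousAt
  have hθdcont : Continuous θd := by
    apply continuous_iff_continuousAt.mpr
    exact fun x => (hθdd x).continuousAt
  -- the solution
  set φ : ℝ → ℂ := fun x => Complex.exp (-μ*↑x) * (1 + θ x) with hφdef
  set φd : ℝ → ℂ := fun x => Complex.exp (-μ*↑x) * (-μ*(1 + θ x) + θd x) with hφddef
  have hexpneg : ∀ x : ℝ, HasDerivAt (fun y : ℝ => Complex.exp (-μ*↑y))
      (-μ*Complex.exp (-μ*↑x)) x := by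
    intro x
    have h0 : HasDerivAt (fun y : ℝ => ((y : ℂ))) 1 x := Complex.ofRealCLM.hasDerivAt
    have h1 := h0.const_mul (-μ)
    simpa [mul_comm] using h1.cexp
  have hφd : ∀ x, HasDerivAt φ (φd x) x := by
    intro x
    have h := (hexpneg x).mul ((hθd x).const_add 1)
    rw [hφddef]
    refine h.congr_deriv (Eq.symm ?_)
    ring
  have hφdd : ∀ x, HasDerivAt φd
      (Complex.exp (-μ*↑x) * ((μ*μ)*(1 + θ x) - ζ x*(1 + θ x))) x := by
    intro x
    have hinner : HasDerivAt (fun y => -μ*(1 + θ y) + θd y)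
        (-μ*θd x + (2*μ*θd x - ζ x * (1 + θ x))) x :=
      (((hθd x).const_add 1).const_mul (-μ)).add (hθdd x)
    have h := (hexpneg x).mul hinner
    refine h.congr_deriv (Eq.symm ?_)
    ring
  have hderiv1 : deriv φ = φd := funext fun x => (hφd x).deriv
  have hderiv2 : deriv φd = fun x =>
      Complex.exp (-μ*↑x) * ((μ*μ)*(1 + θ x) - ζ x*(1 + θ x)) :=
    funext fun x => (hφdd x).deriv
  have hφdiff : Differentiable ℝ φ := fun x => (hφd x).differentiableAt
  have hφddiff : Differentiable ℝ φd := fun x => (hφdd x).differentiableAt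
  have hsmooth : ContDiff ℝ 2 φ := by
    rw [show (2 : WithTop ℕ∞) = 1 + 1 from by norm_num]
    apply contDiff_succ_iff_deriv.mpr
    refine ⟨hφdiff, by simp, ?_⟩
    rw [hderiv1]
    apply contDiff_one_iff_deriv.mpr
    refine ⟨hφddiff, ?_⟩
    rw [hderiv2]
    apply Continuous.mul
    · exact Complex.continuous_exp.comp (continuous_const.mul Complex.continuous_ofReal)
    · exact ((continuous_const.mul (continuous_const.add hθcont)).sub
        (hζc.mul (continuous_const.add hθcont)))
  refine ⟨φ, θ, (fun x => θd x - μ * θ x), hsmooth, ?_, ?_, ?_, ?_⟩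
  · -- ODE
    intro x hx
    rw [hderiv1, (hφdd x).deriv, hζeq x hx, hφdef]
    simp only []
    rw [← hμsq]
    ring
  · intro x hx
    rfl
  · intro x hx
    rw [hderiv1, hφddef]
    simp only []
    ring_nf
  · intro x hx
    have hx0 : (0:ℝ) ≤ x := by linarith
    have h1 := hb1 x hx0
    have h2 := hb2 x hx0
    have he : 0 ≤ Real.exp (-α*x) := Real.exp_nonneg _
    constructor
    · refine h1.trans ?_
      apply mul_le_mul_of_nonneg_right _ he
      rw [hCdef]
      have hs : 0 ≤ Real.sqrt Ms * (U * (4*K/α^2)) := by positivity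
      have hs2 : 0 ≤ U * (K/α) := by positivity
      linarith
    · have h3 : ‖θd x - μ * θ x‖ ≤ ‖θd x‖ + ‖μ‖ * ‖θ x‖ := by
        refine (norm_sub_le _ _).trans ?_
        rw [norm_mul]
      have h4 : ‖μ‖ * ‖θ x‖ ≤ Real.sqrt Ms * (U * (4*K/α^2) * Real.exp (-α*x)) :=
        mul_le_mul hμabs h1 (norm_nonneg _) (Real.sqrt_nonneg Ms)
      calc ‖θd x - μ * θ x‖
          ≤ (U * (K/α) + Real.sqrt Ms * (U * (4*K/α^2))) * Real.exp (-α*x) := by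
            rw [add_mul]
            have : Real.sqrt Ms * (U * (4*K/α^2) * Real.exp (-α*x))
                = Real.sqrt Ms * (U * (4*K/α^2)) * Real.exp (-α*x) := by ring
            rw [this] at h4
            linarith
        _ ≤ C * Real.exp (-α*x) := by
            apply mul_le_mul_of_nonneg_right _ he
            rw [hCdef]
            have : 0 ≤ U * (4*K/α^2) := by positivity
            linarith
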